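/- Let k ≥ 1 and let μ_k be a locally translation invariant probability measure on {0,1}^{k+1}, and let μ_{k+1} be its Markovian extension defined by μ_{k+1}(η_0,...,η_{k+1}) = μ_k(η_0,...,η_k)·μ_k(η_1,...,η_{k+1})/μ_{k-1}(η_1,...,η_k) (set to 0 when μ_{k-1}(η_1,...,η_k)=0). Then μ_{k+1} is locally translation invariant, i.e., ∑_σ μ_{k+1}(η_0,...,η_k,σ) = ∑_σ μ_{k+1}(σ,η_0,...,η_k) for all (η_0,...,η_k), and its marginal on the first k+1 coordinates equals μ_k. -/

import Mathlib

/-- Local translation invariance for a measure on `{0,1}^{k+1}`. -/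
def IsLTI (k : ℕ) (μ : (Fin (k + 1) → Bool) → ℝ) : Prop :=
  ∀ η : Fin k → Bool, (∑ σ : Bool, μ (Fin.snoc η σ)) = ∑ σ : Bool, μ (Fin.cons σ η)

/-- The Markovian extension of a measure on `{0,1}^{k+1}` to `{0,1}^{k+2}`. -/
noncomputable def markovExt (k : ℕ) (μ : (Fin (k + 1) → Bool) → ℝ) :
    (Fin (k + 1 + 1) → Bool) → ℝ := fun η =>
  if (∑ σ : Bool, μ (Fin.snoc (fun i : Fin k => η i.succ.castSucc) σ)) = 0 then 0
  else μ (fun i => η i.castSucc) * μ (fun i => η i.succ)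
        / ∑ σ : Bool, μ (Fin.snoc (fun i : Fin k => η i.succ.castSucc) σ)


theorem stmt1 (k : ℕ) (hk : 1 ≤ k) (μ : (Fin (k + 1) → Bool) → ℝ)
    (hpos : ∀ η, 0 ≤ μ η) (hsum : (∑ η, μ η) = 1) (hLTI : IsLTI k μ) :
    IsLTI (k + 1) (markovExt k μ) ∧
      ∀ η : Fin (k + 1) → Bool, (∑ σ : Bool, markovExt k μ (Fin.snoc η σ)) = μ η := by
  have key : ∀ η : Fin (k + 1) → Bool,
      (∑ σ : Bool, markovExt k μ (Fin.snoc η σ)) = μ η := by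
    intro η
    have hmid : ∀ σ : Bool,
        (fun i : Fin k => (Fin.snoc η σ : Fin (k + 1 + 1) → Bool) i.succ.castSucc)
          = fun i => η i.succ := by
      intro σ; funext i; simp only [Fin.snoc_castSucc]
    have hfront : ∀ σ : Bool,
        (fun i : Fin (k + 1) => (Fin.snoc η σ : Fin (k + 1 + 1) → Bool) i.castSucc) = η := by
      intro σ; funext i; simp [Fin.snoc_castSucc]
    have htail : ∀ σ : Bool,
        (fun i : Fin (k + 1) => (Fin.snoc η σ : Fin (k + 1 + 1) → Bool) i.succ)
          = Fin.snoc (fun i : Fin k => η i.succ) σ := by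
      intro σ; funext i
      refine Fin.lastCases ?_ (fun j => ?_) i
      · rw [Fin.succ_last, Fin.snoc_last, Fin.snoc_last]
      · rw [Fin.succ_castSucc, Fin.snoc_castSucc, Fin.snoc_castSucc]
    have hrw : ∀ σ : Bool, markovExt k μ (Fin.snoc η σ) =
        if (∑ τ : Bool, μ (Fin.snoc (fun i : Fin k => η i.succ) τ)) = 0 then 0
        else μ η * μ (Fin.snoc (fun i : Fin k => η i.succ) σ)
          / ∑ τ : Bool, μ (Fin.snoc (fun i : Fin k => η i.succ) τ) := by
      intro σ
      simp only [markovExt, hmid σ, hfront σ, htail σ]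
    rw [Finset.sum_congr rfl (fun σ _ => hrw σ)]
    by_cases hZ : (∑ τ : Bool, μ (Fin.snoc (fun i : Fin k => η i.succ) τ)) = 0
    · simp only [hZ, if_true, Finset.sum_const_zero]
      have hz' : (∑ σ : Bool, μ (Fin.cons σ (fun i : Fin k => η i.succ))) = 0 := by
        rw [← hLTI]; exact hZ
      have hall : ∀ σ : Bool, μ (Fin.cons σ (fun i : Fin k => η i.succ)) = 0 := by
        intro σ
        have := (Finset.sum_eq_zero_iff_of_nonneg (fun τ _ => hpos _)).mp hz'
        exact this σ (Finset.mem_univ σ)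
      have : μ η = μ (Fin.cons (η 0) (fun i : Fin k => η i.succ)) := by
        congr 1
        funext i
        refine Fin.cases ?_ (fun j => ?_) i
        · rw [Fin.cons_zero]
        · rw [Fin.cons_succ]
      rw [this, hall]
    · simp only [hZ, if_false]
      rw [← Finset.sum_div, ← Finset.mul_sum, mul_div_assoc, div_self hZ, mul_one]
  refine ⟨?_, key⟩
  intro η
  rw [key η]
  have hmid : ∀ σ : Bool,
      (fun i : Fin k => (Fin.cons σ η : Fin (k + 1 + 1) → Bool) i.succ.castSucc)
        = fun i => η i.castSucc := by
    intro σ; funext i; rw [← Fin.succ_castSucc, Fin.cons_succ]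
  have hfront : ∀ σ : Bool,
      (fun i : Fin (k + 1) => (Fin.cons σ η : Fin (k + 1 + 1) → Bool) i.castSucc)
        = Fin.cons σ (fun i : Fin k => η i.castSucc) := by
    intro σ; funext i
    refine Fin.cases ?_ (fun j => ?_) i
    · rw [Fin.castSucc_zero, Fin.cons_zero, Fin.cons_zero]
    · rw [← Fin.succ_castSucc, Fin.cons_succ, Fin.cons_succ]
  have htail : ∀ σ : Bool,
      (fun i : Fin (k + 1) => (Fin.cons σ η : Fin (k + 1 + 1) → Bool) i.succ) = η := by
    intro σ; funext i; rw [Fin.cons_succ]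
  have hrw : ∀ σ : Bool, markovExt k μ (Fin.cons σ η) =
      if (∑ τ : Bool, μ (Fin.snoc (fun i : Fin k => η i.castSucc) τ)) = 0 then 0
      else μ (Fin.cons σ (fun i : Fin k => η i.castSucc)) * μ η
        / ∑ τ : Bool, μ (Fin.snoc (fun i : Fin k => η i.castSucc) τ) := by
    intro σ
    simp only [markovExt, hmid σ, hfront σ, htail σ]
  rw [Finset.sum_congr rfl (fun σ _ => hrw σ)]
  by_cases hW : (∑ τ : Bool, μ (Fin.snoc (fun i : Fin k => η i.castSucc) τ)) = 0
  · simp only [hW, if_true, Finset.sum_const_zero]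
    have hall : ∀ τ : Bool, μ (Fin.snoc (fun i : Fin k => η i.castSucc) τ) = 0 := by
      intro τ
      have := (Finset.sum_eq_zero_iff_of_nonneg (fun τ _ => hpos _)).mp hW
      exact this τ (Finset.mem_univ τ)
    have : μ η = μ (Fin.snoc (fun i : Fin k => η i.castSucc) (η (Fin.last k))) := by
      congr 1
      funext i
      refine Fin.lastCases ?_ (fun j => ?_) i
      · rw [Fin.snoc_last]
      · rw [Fin.snoc_castSucc]
    rw [this, hall]
  · simp only [hW, if_false]
    rw [← Finset.sum_div, ← Finset.sum_mul, ← hLTI, mul_comm, mul_div_assoc, div_self hW, mul_one]
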